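/- Let $m\ge 0$ and define for $l\ge 0$ the element $P_{m+2l,l}=X^{m+1}\wedge X^{m+3}\wedge\cdots\wedge X^{m+2l-1}$ (with $P_{m,0}=1$), a skew-symmetric polynomial in $X_1,\dots,X_l$. Then for all $n=m+2l$, the linking condition holds: $P_{n+2,l+1}(X_1,\dots,X_l,z^{-1}\mid z_1,\dots,z_n,z,-z)=z^{-n-1}\prod_{a=1}^l(1-X_a^2z^2)\cdot P_{n,l}(X_1,\dots,X_l\mid z_1,\dots,z_n)$. -/

import Mathlib

open Finset

lemma Ioi_castSucc' (l : ℕ) (i : Fin l) :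
    Finset.Ioi (Fin.castSucc i) =
      insert (Fin.last l) ((Finset.Ioi i).map Fin.castSuccEmb) := by
  ext j
  simp only [Finset.mem_Ioi, Finset.mem_insert, Finset.mem_map, Fin.lt_iff_val_lt_val,
    Fin.castSuccEmb, Fin.coe_castSucc]
  constructor
  · intro h
    rcases Fin.eq_castSucc_or_eq_last j with ⟨j', rfl⟩ | hj
    case inr => exact Or.inl hj
    exact Or.inr ⟨j', h, rfl⟩
  · rintro (rfl | ⟨j', hj', rfl⟩)
    · exact i.isLt
    · exact hj'

lemma vand_snoc (l : ℕ) (v : Fin l → ℂ) (w : ℂ) :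
    (Matrix.vandermonde (Fin.snoc v w : Fin (l + 1) → ℂ)).det =
      (∏ a : Fin l, (w - v a)) * (Matrix.vandermonde v).det := by
  rw [Matrix.det_vandermonde, Matrix.det_vandermonde, Fin.prod_univ_castSucc]
  have hlast : Finset.Ioi (Fin.last l) = (∅ : Finset (Fin (l + 1))) := by
    ext j; simp [Fin.lt_iff_val_lt_val, Nat.lt_succ_iff, Fin.le_last, Fin.is_le]
  rw [hlast, Finset.prod_empty, mul_one]
  have key : ∀ i : Fin l,
      (∏ j ∈ Finset.Ioi (Fin.castSucc i),
        ((Fin.snoc v w : Fin (l+1) → ℂ) j - (Fin.snoc v w : Fin (l+1) → ℂ) (Fin.castSucc i)))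
      = (w - v i) * ∏ j ∈ Finset.Ioi i, (v j - v i) := by
    intro i
    rw [Ioi_castSucc', Finset.prod_insert, Finset.prod_map]
    · simp only [Fin.snoc_castSucc, Fin.snoc_last]
      congr 1
      exact Finset.prod_congr rfl fun x _ => by
        rw [show Fin.castSuccEmb x = Fin.castSucc x from rfl, Fin.snoc_castSucc]
    · simp only [Finset.mem_map, not_exists]
      rintro a ⟨-, h⟩
      have := congrArg Fin.val h
      simp only [Fin.coe_castSuccEmb, Fin.coe_castSucc, Fin.val_last] at this
      omega
  rw [Finset.prod_congr rfl fun i _ => key i, Finset.prod_mul_distrib]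

lemma det_pow_fact (m n : ℕ) (v : Fin n → ℂ) :
    Matrix.det (Matrix.of fun i j : Fin n => v i ^ (m + 2 * (j : ℕ) + 1)) =
      (∏ i, v i ^ (m + 1)) * (Matrix.vandermonde fun i => v i ^ 2).det := by
  have h : (Matrix.of fun i j : Fin n => v i ^ (m + 2 * (j : ℕ) + 1)) =
      Matrix.of fun i j => v i ^ (m + 1) * Matrix.vandermonde (fun i => v i ^ 2) i j := by
    ext i j
    simp only [Matrix.of_apply, Matrix.vandermonde]
    rw [← pow_mul, ← pow_add]
    ring_nf
  rw [h, Matrix.det_mul_column]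

/-- For `m ≥ 0`, the cycles
`P_{m+2l,l} = X^{m+1} ∧ X^{m+3} ∧ ⋯ ∧ X^{m+2l-1} = det(X_i^{m+2j-1})` satisfy the
linking condition
`P_{n+2,l+1}(X₁,…,X_l,z⁻¹) = z^{-n-1} ∏ₐ(1 - Xₐ²z²) · P_{n,l}(X₁,…,X_l)` for `n = m+2l`. -/
theorem stmt10 (m l : ℕ) :
    let P : (l' : ℕ) → (Fin l' → ℂ) → ℂ := fun l' Xv =>
      Matrix.det (Matrix.of fun i j : Fin l' => Xv i ^ (m + 2 * (j : ℕ) + 1))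
    ∀ (z : ℂ), z ≠ 0 → ∀ Xv : Fin l → ℂ,
      P (l + 1) (Fin.snoc Xv z⁻¹) =
        z⁻¹ ^ (m + 2 * l + 1) * (∏ a : Fin l, (1 - (Xv a) ^ 2 * z ^ 2)) * P l Xv := by
  intro P z hz Xv
  show P (l+1) _ = _
  simp only [P]
  rw [det_pow_fact, det_pow_fact]
  have hsq : (fun i : Fin (l + 1) => (Fin.snoc Xv z⁻¹ : Fin (l+1) → ℂ) i ^ 2) =
      Fin.snoc (fun i => Xv i ^ 2) (z⁻¹ ^ 2) := by
    funext i
    induction i using Fin.lastCases with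
    | last => simp
    | cast i => simp
  rw [hsq, vand_snoc, Fin.prod_univ_castSucc]
  simp only [Fin.snoc_castSucc, Fin.snoc_last]
  have h2 : ∀ a : Fin l, z⁻¹ ^ 2 - Xv a ^ 2 = z⁻¹ ^ 2 * (1 - Xv a ^ 2 * z ^ 2) := by
    intro a
    field_simp
  rw [Finset.prod_congr rfl fun a _ => h2 a, Finset.prod_mul_distrib, Finset.prod_const,
    Finset.card_univ, Fintype.card_fin]
  rw [show m + 2 * l + 1 = (m + 1) + 2 * l from by ring, pow_add, ← pow_mul]
  ring
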